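/- arXiv:2008.03489 — 4 statements merged into one kernel-verified Lean document; each statement's English description precedes it below -/
import Mathlib

section
/- Let F and G be clausal ground formulas (without equality) and let N₀ be the root of a leaf-closed two-sided clausal ground tableau for F and G. Then (1) F ⊨ ipol(N₀) ⊨ ¬G, and (2) lit(ipol(N₀)) ⊆ lit(F) ∩ lit(¬G). -/
open Classical

namespace CTIF

/-- First-order terms: variables and applications of function symbols
(a function symbol is a natural number used with an arity). -/
inductive Tm : Type where
  | var : ℕ → Tm
  | app : ℕ → (n : ℕ) → (Fin n → Tm) → Tm

/-- First-order formulas without equality. -/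
inductive Fml : Type where
  | tru : Fml
  | fls : Fml
  | atom : ℕ → (n : ℕ) → (Fin n → Tm) → Fml
  | neg : Fml → Fml
  | conj : Fml → Fml → Fml
  | disj : Fml → Fml → Fml
  | all : ℕ → Fml → Fml
  | exi : ℕ → Fml → Fml

/-- A structure: interpretation of all function and predicate symbols (at every arity). -/
structure Struc (D : Type) : Type where
  fn : ℕ → (n : ℕ) → (Fin n → D) → D
  pr : ℕ → (n : ℕ) → (Fin n → D) → Prop

def Tm.eval {D : Type} (M : Struc D) (a : ℕ → D) : Tm → D
  | .var x => a x
  | .app f n ts => M.fn f n (fun i => (ts i).eval M a)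

def Fml.sat {D : Type} : Fml → Struc D → (ℕ → D) → Prop
  | .tru, _, _ => True
  | .fls, _, _ => False
  | .atom p n ts, M, a => M.pr p n (fun i => (ts i).eval M a)
  | .neg F, M, a => ¬ F.sat M a
  | .conj F G, M, a => F.sat M a ∧ G.sat M a
  | .disj F G, M, a => F.sat M a ∨ G.sat M a
  | .all x F, M, a => ∀ d, F.sat M (Function.update a x d)
  | .exi x F, M, a => ∃ d, F.sat M (Function.update a x d)

/-- Entailment: every model (with any variable assignment) of `F` satisfies `G`. -/
def entails (F G : Fml) : Prop :=
  ∀ (D : Type), Nonempty D → ∀ (M : Struc D) (a : ℕ → D), F.sat M a → G.sat M a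

def Tm.vars : Tm → Set ℕ
  | .var x => {x}
  | .app _ _ ts => ⋃ i, (ts i).vars

/-- Function symbols (with their arity) occurring in a term. -/
def Tm.funs : Tm → Set (ℕ × ℕ)
  | .var _ => ∅
  | .app f n ts => insert (f, n) (⋃ i, (ts i).funs)

def Tm.isGround (t : Tm) : Prop := t.vars = ∅

/-- `t` is a ground term all of whose function symbols come from `S`. -/
def Tm.builtFrom (S : Set (ℕ × ℕ)) : Tm → Prop
  | .var _ => False
  | .app f n ts => (f, n) ∈ S ∧ ∀ i, Tm.builtFrom S (ts i)

/-- `t` occurs (as a subterm) in the given term. -/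
def Tm.occursIn (t : Tm) : Tm → Prop
  | .var x => t = Tm.var x
  | .app f n ts => t = Tm.app f n ts ∨ ∃ i, Tm.occursIn t (ts i)

/-- `s` is a strict subterm of `t`. -/
def Tm.strictSub (s t : Tm) : Prop := s ≠ t ∧ s.occursIn t

def Fml.funs : Fml → Set (ℕ × ℕ)
  | .tru => ∅
  | .fls => ∅
  | .atom _ _ ts => ⋃ i, (ts i).funs
  | .neg F => F.funs
  | .conj F G => F.funs ∪ G.funs
  | .disj F G => F.funs ∪ G.funs
  | .all _ F => F.funs
  | .exi _ F => F.funs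

/-- Predicate symbols with the polarity (`true` = positive) of their occurrences;
the second argument is the polarity of the context. -/
def Fml.preds : Fml → Bool → Set (ℕ × Bool)
  | .tru, _ => ∅
  | .fls, _ => ∅
  | .atom p _ _, pol => {(p, pol)}
  | .neg F, pol => F.preds (!pol)
  | .conj F G, pol => F.preds pol ∪ G.preds pol
  | .disj F G, pol => F.preds pol ∪ G.preds pol
  | .all _ F, pol => F.preds pol
  | .exi _ F, pol => F.preds pol

/-- pred(F): predicates paired with the polarities of their occurrences in `F`. -/
def Fml.pred (F : Fml) : Set (ℕ × Bool) := F.preds true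

/-- Predicate symbols occurring in a formula (disregarding polarity). -/
def Fml.predSyms : Fml → Set ℕ
  | .tru => ∅
  | .fls => ∅
  | .atom p _ _ => {p}
  | .neg F => F.predSyms
  | .conj F G => F.predSyms ∪ G.predSyms
  | .disj F G => F.predSyms ∪ G.predSyms
  | .all _ F => F.predSyms
  | .exi _ F => F.predSyms

def Fml.free : Fml → Set ℕ
  | .tru => ∅
  | .fls => ∅
  | .atom _ _ ts => ⋃ i, (ts i).vars
  | .neg F => F.free
  | .conj F G => F.free ∪ G.free
  | .disj F G => F.free ∪ G.free
  | .all x F => F.free \ {x}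
  | .exi x F => F.free \ {x}

/-- Variables occurring bound (i.e. quantified upon) in a formula. -/
def Fml.bound : Fml → Set ℕ
  | .tru => ∅
  | .fls => ∅
  | .atom _ _ _ => ∅
  | .neg F => F.bound
  | .conj F G => F.bound ∪ G.bound
  | .disj F G => F.bound ∪ G.bound
  | .all x F => insert x F.bound
  | .exi x F => insert x F.bound

def Fml.isQF : Fml → Prop
  | .tru => True
  | .fls => True
  | .atom _ _ _ => True
  | .neg F => F.isQF
  | .conj F G => F.isQF ∧ G.isQF
  | .disj F G => F.isQF ∧ G.isQF
  | .all _ _ => False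
  | .exi _ _ => False

def Fml.isGround (F : Fml) : Prop := F.isQF ∧ F.free = ∅

def Fml.isSentence (F : Fml) : Prop := F.free = ∅

/-- Substitutions: mappings from variables to terms. -/
abbrev Subst := ℕ → Tm

def Subst.dom (σ : Subst) : Set ℕ := {x | σ x ≠ Tm.var x}

def Subst.rng (σ : Subst) : Set Tm := {t | ∃ x ∈ σ.dom, σ x = t}

def Subst.isGround (σ : Subst) : Prop := ∀ x ∈ σ.dom, (σ x).isGround

/-- Injective substitution: distinct domain variables are mapped to distinct terms. -/
def Subst.inj (σ : Subst) : Prop := ∀ x ∈ σ.dom, ∀ y ∈ σ.dom, σ x = σ y → x = y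

def Tm.subst (σ : Subst) : Tm → Tm
  | .var x => σ x
  | .app f n ts => .app f n (fun i => (ts i).subst σ)

/-- Substitution application to formulas (free occurrences of variables are replaced). -/
def Fml.subst (σ : Subst) : Fml → Fml
  | .tru => .tru
  | .fls => .fls
  | .atom p n ts => .atom p n (fun i => (ts i).subst σ)
  | .neg F => .neg (F.subst σ)
  | .conj F G => .conj (F.subst σ) (G.subst σ)
  | .disj F G => .disj (F.subst σ) (G.subst σ)
  | .all x F => .all x (F.subst (Function.update σ x (Tm.var x)))
  | .exi x F => .exi x (F.subst (Function.update σ x (Tm.var x)))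

/-- Inverse application of an injective substitution to a term:
all rng(σ)-maximal occurrences of terms in the range of σ are replaced by
the corresponding domain variable. -/
noncomputable def Tm.inv (σ : Subst) : Tm → Tm
  | .var x =>
      if h : ∃ v ∈ Subst.dom σ, σ v = Tm.var x then Tm.var h.choose else Tm.var x
  | .app f n ts =>
      if h : ∃ v ∈ Subst.dom σ, σ v = Tm.app f n ts then Tm.var h.choose
      else .app f n (fun i => Tm.inv σ (ts i))

/-- Inverse application of an injective substitution to a formula. -/
noncomputable def Fml.inv (σ : Subst) : Fml → Fml
  | .tru => .tru
  | .fls => .fls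
  | .atom p n ts => .atom p n (fun i => Tm.inv σ (ts i))
  | .neg F => .neg (F.inv σ)
  | .conj F G => .conj (F.inv σ) (G.inv σ)
  | .disj F G => .disj (F.inv σ) (G.inv σ)
  | .all x F => .all x (F.inv σ)
  | .exi x F => .exi x (F.inv σ)

/-- `H` is a Craig-Lyndon interpolant of `F` and `G`. -/
def CLInterp (F G H : Fml) : Prop :=
  entails F H ∧ entails H G ∧
  H.pred ⊆ F.pred ∩ G.pred ∧
  H.funs ⊆ F.funs ∩ G.funs ∧
  H.free ⊆ F.free ∩ G.free

/-- `H` is a Craig interpolant of `F` and `G` (no polarity constraint). -/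
def CraigInterp (F G H : Fml) : Prop :=
  entails F H ∧ entails H G ∧
  H.predSyms ⊆ F.predSyms ∩ G.predSyms ∧
  H.funs ⊆ F.funs ∩ G.funs ∧
  H.free ⊆ F.free ∩ G.free

/-- An S-term: a term whose outermost function symbol is in `S`. -/
def isSTerm (S : Set (ℕ × ℕ)) : Tm → Prop
  | .var _ => False
  | .app f n _ => (f, n) ∈ S

def STerms (S : Set (ℕ × ℕ)) : Set Tm := {t | isSTerm S t}

/-- `t` has a `T`-maximal occurrence in the given term: an occurrence that is
not within an occurrence of another member of `T`. -/
def Tm.hasMaxOcc (T : Set Tm) (t : Tm) : Tm → Prop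
  | .var x => Tm.var x ∈ T ∧ t = Tm.var x
  | .app f n ts =>
      (Tm.app f n ts ∈ T ∧ t = Tm.app f n ts) ∨
      (Tm.app f n ts ∉ T ∧ ∃ i, Tm.hasMaxOcc T t (ts i))

/-- `t` has a `T`-maximal occurrence in the formula. -/
def Fml.hasMaxOcc (T : Set Tm) (t : Tm) : Fml → Prop
  | .tru => False
  | .fls => False
  | .atom _ _ ts => ∃ i, Tm.hasMaxOcc T t (ts i)
  | .neg F => F.hasMaxOcc T t
  | .conj F G => F.hasMaxOcc T t ∨ G.hasMaxOcc T t
  | .disj F G => F.hasMaxOcc T t ∨ G.hasMaxOcc T t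
  | .all _ F => F.hasMaxOcc T t
  | .exi _ F => F.hasMaxOcc T t

/-- Universal quantification over a list of variables. -/
def alls (xs : List ℕ) (F : Fml) : Fml := xs.foldr Fml.all F

end CTIF
namespace CTIF

/-- A literal: an atom (pos = true) or a negated atom (pos = false). -/
structure Lit : Type where
  pos : Bool
  p : ℕ
  arity : ℕ
  args : Fin arity → Tm

def Lit.compl (L : Lit) : Lit := { L with pos := !L.pos }

def Lit.toFml (L : Lit) : Fml :=
  if L.pos then .atom L.p L.arity L.args else .neg (.atom L.p L.arity L.args)

def Lit.isGround (L : Lit) : Prop := ∀ i, (L.args i).isGround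

def Lit.funs (L : Lit) : Set (ℕ × ℕ) := ⋃ i, (L.args i).funs

/-- A clause: a disjunction of literals. -/
abbrev Clause := List Lit

/-- A clausal formula: a conjunction of clauses. -/
abbrev CF := List Clause

def Clause.toFml : Clause → Fml
  | [] => .fls
  | [L] => L.toFml
  | L :: C => .disj L.toFml (Clause.toFml C)

def CF.toFml : CF → Fml
  | [] => .tru
  | [C] => C.toFml
  | C :: F => .conj C.toFml (CF.toFml F)

def Lit.subst (σ : Subst) (L : Lit) : Lit := { L with args := fun i => (L.args i).subst σ }

def Clause.subst (σ : Subst) (C : Clause) : Clause := C.map (Lit.subst σ)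

/-- `C` is an instance of `C'`. -/
def isInstanceOf (C C' : Clause) : Prop := ∃ σ : Subst, C = Clause.subst σ C'

/-- `C` is an instance of some clause of the clausal formula `F`. -/
def instOfSome (F : CF) (C : Clause) : Prop := ∃ C' ∈ F, isInstanceOf C C'

def Lit.sat {D : Type} (M : Struc D) (a : ℕ → D) (L : Lit) : Prop := (L.toFml).sat M a

def Clause.sat {D : Type} (M : Struc D) (a : ℕ → D) (C : Clause) : Prop := ∃ L ∈ C, L.sat M a

def CF.sat {D : Type} (M : Struc D) (a : ℕ → D) (F : CF) : Prop := ∀ C ∈ F, Clause.sat M a C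

/-- Unsatisfiability of the universal closure ∀x₁…∀xₙ F of a clausal formula:
in no structure all assignments satisfy `F`. -/
def CF.closureUnsat (F : CF) : Prop :=
  ∀ (D : Type), Nonempty D → ∀ (M : Struc D), ¬ ∀ a : ℕ → D, CF.sat M a F

def CF.funs (F : CF) : Set (ℕ × ℕ) := {fn | ∃ C ∈ F, ∃ L ∈ C, fn ∈ L.funs}

/-- lit(F): the atoms (encoded as literals with `pos` giving the polarity)
occurring in `F` together with the polarity of their occurrence. -/
def Fml.lits : Fml → Bool → Set Lit
  | .tru, _ => ∅
  | .fls, _ => ∅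
  | .atom p n ts, pol => {⟨pol, p, n, ts⟩}
  | .neg F, pol => F.lits (!pol)
  | .conj F G, pol => F.lits pol ∪ G.lits pol
  | .disj F G, pol => F.lits pol ∪ G.lits pol
  | .all _ F, pol => F.lits pol
  | .exi _ F, pol => F.lits pol

def Fml.litset (F : Fml) : Set Lit := F.lits true

end CTIF
namespace CTIF

/-- The non-root part of a two-sided clausal tableau: nodes carry a literal label
and a side label (`true` = side F, `false` = side G). -/
inductive Tab2 : Type where
  | node : Lit → Bool → List Tab2 → Tab2

def Tab2.lit : Tab2 → Lit
  | .node L _ _ => L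

def Tab2.side : Tab2 → Bool
  | .node _ s _ => s

/-- Well-formedness of a subtree of a two-sided clausal tableau for `F` and `G`:
siblings share their side label; if the children have side F (resp. G) then the
disjunction of their literals is an instance of a clause of `F` (resp. `G`). -/
inductive Tab2.isFor (F G : CF) : Tab2 → Prop where
  | mk : ∀ (L : Lit) (s : Bool) (cs : List Tab2) (s' : Bool),
      (∀ t ∈ cs, Tab2.side t = s') →
      (cs ≠ [] → instOfSome (if s' then F else G) (cs.map Tab2.lit)) →
      (∀ t ∈ cs, Tab2.isFor F G t) →
      Tab2.isFor F G (.node L s cs)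

/-- All leaves of the subtree are closing: each leaf has an ancestor labeled with
the complementary literal. `anc` is the list of the ancestors' literals. -/
inductive Tab2.leafClosed : List Lit → Tab2 → Prop where
  | leaf : ∀ (anc : List Lit) (L : Lit) (s : Bool),
      L.compl ∈ anc → Tab2.leafClosed anc (.node L s [])
  | inner : ∀ (anc : List Lit) (L : Lit) (s : Bool) (cs : List Tab2),
      cs ≠ [] → (∀ t ∈ cs, Tab2.leafClosed (L :: anc) t) →
      Tab2.leafClosed anc (.node L s cs)

/-- All literal labels in the subtree are ground. -/
inductive Tab2.ground : Tab2 → Prop where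
  | mk : ∀ (L : Lit) (s : Bool) (cs : List Tab2),
      L.isGround → (∀ t ∈ cs, Tab2.ground t) → Tab2.ground (.node L s cs)

def bigDisj : List Fml → Fml
  | [] => .fls
  | [H] => H
  | H :: Hs => .disj H (bigDisj Hs)

def bigConj : List Fml → Fml
  | [] => .tru
  | [H] => H
  | H :: Hs => .conj H (bigConj Hs)

/-- The function ipol, presented as a relation because a closing leaf may have several
possible targets (ancestors with complementary literal).  `anc` lists the (literal,
side) pairs of the ancestors.  `Ipol anc t H` holds iff `H` is a possible value of
ipol at the node `t`. -/
inductive Ipol : List (Lit × Bool) → Tab2 → Fml → Prop where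
  | leafFF : ∀ (anc : List (Lit × Bool)) (L : Lit),
      (L.compl, true) ∈ anc → Ipol anc (.node L true []) .fls
  | leafFG : ∀ (anc : List (Lit × Bool)) (L : Lit),
      (L.compl, false) ∈ anc → Ipol anc (.node L true []) L.toFml
  | leafGF : ∀ (anc : List (Lit × Bool)) (L : Lit),
      (L.compl, true) ∈ anc → Ipol anc (.node L false []) L.compl.toFml
  | leafGG : ∀ (anc : List (Lit × Bool)) (L : Lit),
      (L.compl, false) ∈ anc → Ipol anc (.node L false []) .tru
  | innerF : ∀ (anc : List (Lit × Bool)) (L : Lit) (s : Bool) (cs : List Tab2) (Hs : List Fml),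
      cs ≠ [] → (∀ t ∈ cs, Tab2.side t = true) →
      ∀ (hlen : cs.length = Hs.length),
      (∀ i : Fin cs.length, Ipol ((L, s) :: anc) (cs.get i) (Hs.get (Fin.cast hlen i))) →
      Ipol anc (.node L s cs) (bigDisj Hs)
  | innerG : ∀ (anc : List (Lit × Bool)) (L : Lit) (s : Bool) (cs : List Tab2) (Hs : List Fml),
      cs ≠ [] → (∀ t ∈ cs, Tab2.side t = false) →
      ∀ (hlen : cs.length = Hs.length),
      (∀ i : Fin cs.length, Ipol ((L, s) :: anc) (cs.get i) (Hs.get (Fin.cast hlen i))) →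
      Ipol anc (.node L s cs) (bigConj Hs)

/-- The value of ipol at the (unlabeled) root, whose children are `cs`. -/
inductive IpolRoot : List Tab2 → Fml → Prop where
  | rootF : ∀ (cs : List Tab2) (Hs : List Fml),
      cs ≠ [] → (∀ t ∈ cs, Tab2.side t = true) →
      ∀ (hlen : cs.length = Hs.length),
      (∀ i : Fin cs.length, Ipol [] (cs.get i) (Hs.get (Fin.cast hlen i))) →
      IpolRoot cs (bigDisj Hs)
  | rootG : ∀ (cs : List Tab2) (Hs : List Fml),
      cs ≠ [] → (∀ t ∈ cs, Tab2.side t = false) →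
      ∀ (hlen : cs.length = Hs.length),
      (∀ i : Fin cs.length, Ipol [] (cs.get i) (Hs.get (Fin.cast hlen i))) →
      IpolRoot cs (bigConj Hs)

/-- A two-sided clausal tableau, given by the children of the (unlabeled) root. -/
structure Tableau2 : Type where
  children : List Tab2

def Tableau2.isFor (F G : CF) (T : Tableau2) : Prop :=
  (∃ s' : Bool, (∀ t ∈ T.children, Tab2.side t = s') ∧
    (T.children ≠ [] → instOfSome (if s' then F else G) (T.children.map Tab2.lit))) ∧
  ∀ t ∈ T.children, Tab2.isFor F G t

def Tableau2.leafClosed (T : Tableau2) : Prop :=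
  T.children ≠ [] ∧ ∀ t ∈ T.children, Tab2.leafClosed [] t

def Tableau2.ground (T : Tableau2) : Prop :=
  ∀ t ∈ T.children, Tab2.ground t

end CTIF
namespace CTIF
lemma Tm.subst_ground (σ : Subst) : ∀ t : Tm, t.isGround → t.subst σ = t := by
  intro t
  induction t with
  | var x => intro h; simp [Tm.isGround, Tm.vars] at h
  | app f n ts ih =>
    intro h
    simp only [Tm.isGround, Tm.vars, Set.iUnion_eq_empty] at h
    simp only [Tm.subst]
    congr 1
    funext i
    exact ih i (h i)

lemma Lit.subst_ground (σ : Subst) (L : Lit) (h : L.isGround) : Lit.subst σ L = L := by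
  cases L with
  | mk pos p n args =>
    simp only [Lit.subst]
    congr 1
    funext i
    exact Tm.subst_ground σ _ (h i)

lemma Clause.subst_ground (σ : Subst) (C : Clause) (h : ∀ L ∈ C, L.isGround) :
    Clause.subst σ C = C := by
  induction C with
  | nil => rfl
  | cons L C ih =>
    simp only [Clause.subst, List.map_cons]
    rw [Lit.subst_ground σ L (h L (List.mem_cons_self))]
    have := ih (fun L' hL' => h L' (List.mem_cons_of_mem _ hL'))
    simpa [Clause.subst] using this

lemma instOfSome_ground (F : CF) (C : Clause)
    (hFg : ∀ C' ∈ F, ∀ L ∈ C', Lit.isGround L) (h : instOfSome F C) : C ∈ F := by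
  obtain ⟨C', hC', σ, rfl⟩ := h
  rw [Clause.subst_ground σ C' (hFg C' hC')]
  exact hC'

lemma Lit.compl_compl (L : Lit) : L.compl.compl = L := by
  cases L; simp [Lit.compl]

lemma Lit.sat_compl {D : Type} (M : Struc D) (a : ℕ → D) (L : Lit) :
    Lit.sat M a L.compl ↔ ¬ Lit.sat M a L := by
  cases L with
  | mk pos p n args => cases pos <;> simp [Lit.sat, Lit.compl, Lit.toFml, Fml.sat]

lemma Clause.sat_toFml {D : Type} (M : Struc D) (a : ℕ → D) :
    ∀ C : Clause, (Clause.toFml C).sat M a ↔ Clause.sat M a C := by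
  intro C
  induction C with
  | nil => simp [Clause.toFml, Fml.sat, Clause.sat]
  | cons L C ih =>
    cases C with
    | nil => simp [Clause.toFml, Clause.sat, Lit.sat]
    | cons L' C' =>
      rw [show Clause.toFml (L :: L' :: C') = .disj L.toFml (Clause.toFml (L' :: C')) from rfl]
      rw [show Fml.sat (.disj L.toFml (Clause.toFml (L' :: C'))) M a =
        (L.toFml.sat M a ∨ (Clause.toFml (L' :: C')).sat M a) from rfl]
      rw [ih]
      simp [Clause.sat, Lit.sat, or_assoc]

lemma CF.sat_toFml {D : Type} (M : Struc D) (a : ℕ → D) :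
    ∀ F : CF, (CF.toFml F).sat M a ↔ CF.sat M a F := by
  intro F
  induction F with
  | nil => simp [CF.toFml, Fml.sat, CF.sat]
  | cons C F ih =>
    cases F with
    | nil => simp [CF.toFml, CF.sat, Clause.sat_toFml]
    | cons C' F' =>
      rw [show CF.toFml (C :: C' :: F') = .conj C.toFml (CF.toFml (C' :: F')) from rfl]
      rw [show Fml.sat (.conj C.toFml (CF.toFml (C' :: F'))) M a =
        (C.toFml.sat M a ∧ (CF.toFml (C' :: F')).sat M a) from rfl]
      rw [ih, Clause.sat_toFml]
      constructor
      · rintro ⟨h1, h2⟩ C'' hC''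
        rcases List.mem_cons.mp hC'' with rfl | h
        · exact h1
        · exact h2 _ h
      · intro h
        exact ⟨h _ (List.mem_cons_self), fun C'' hC'' => h _ (List.mem_cons_of_mem _ hC'')⟩

lemma bigDisj_sat {D : Type} (M : Struc D) (a : ℕ → D) :
    ∀ Hs : List Fml, (bigDisj Hs).sat M a ↔ ∃ H ∈ Hs, H.sat M a := by
  intro Hs
  induction Hs with
  | nil => simp [bigDisj, Fml.sat]
  | cons H Hs ih =>
    cases Hs with
    | nil => simp [bigDisj]
    | cons H' Hs' =>
      rw [show bigDisj (H :: H' :: Hs') = .disj H (bigDisj (H' :: Hs')) from rfl]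
      rw [show Fml.sat (.disj H (bigDisj (H' :: Hs'))) M a =
        (H.sat M a ∨ (bigDisj (H' :: Hs')).sat M a) from rfl]
      rw [ih]
      simp

lemma bigConj_sat {D : Type} (M : Struc D) (a : ℕ → D) :
    ∀ Hs : List Fml, (bigConj Hs).sat M a ↔ ∀ H ∈ Hs, H.sat M a := by
  intro Hs
  induction Hs with
  | nil => simp [bigConj, Fml.sat]
  | cons H Hs ih =>
    cases Hs with
    | nil => simp [bigConj]
    | cons H' Hs' =>
      rw [show bigConj (H :: H' :: Hs') = .conj H (bigConj (H' :: Hs')) from rfl]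
      rw [show Fml.sat (.conj H (bigConj (H' :: Hs'))) M a =
        (H.sat M a ∧ (bigConj (H' :: Hs')).sat M a) from rfl]
      rw [ih]
      simp [forall_and]
lemma Lit.lits_toFml_true (L : Lit) : (L.toFml).lits true = {L} := by
  cases L with
  | mk pos p n args => cases pos <;> simp [Lit.toFml, Fml.lits]

lemma Lit.lits_toFml_false (L : Lit) : (L.toFml).lits false = {L.compl} := by
  cases L with
  | mk pos p n args => cases pos <;> simp [Lit.toFml, Fml.lits, Lit.compl]

lemma Clause.mem_lits_true {L : Lit} : ∀ {C : Clause}, L ∈ C → L ∈ (Clause.toFml C).lits true := by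
  intro C
  induction C with
  | nil => simp
  | cons K C ih =>
    intro h
    cases C with
    | nil =>
      rcases List.mem_cons.mp h with rfl | h'
      · simp [Clause.toFml, Lit.lits_toFml_true]
      · simp at h'
    | cons K' C' =>
      rw [show Clause.toFml (K :: K' :: C') = .disj K.toFml (Clause.toFml (K' :: C')) from rfl]
      show L ∈ K.toFml.lits true ∪ (Clause.toFml (K' :: C')).lits true
      rcases List.mem_cons.mp h with rfl | h'
      · exact Or.inl (by simp [Lit.lits_toFml_true])
      · exact Or.inr (ih h')

lemma Clause.mem_lits_false {L : Lit} : ∀ {C : Clause}, L ∈ C → L.compl ∈ (Clause.toFml C).lits false := by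
  intro C
  induction C with
  | nil => simp
  | cons K C ih =>
    intro h
    cases C with
    | nil =>
      rcases List.mem_cons.mp h with rfl | h'
      · simp [Clause.toFml, Lit.lits_toFml_false]
      · simp at h'
    | cons K' C' =>
      rw [show Clause.toFml (K :: K' :: C') = .disj K.toFml (Clause.toFml (K' :: C')) from rfl]
      show L.compl ∈ K.toFml.lits false ∪ (Clause.toFml (K' :: C')).lits false
      rcases List.mem_cons.mp h with rfl | h'
      · exact Or.inl (by simp [Lit.lits_toFml_false])
      · exact Or.inr (ih h')

lemma CF.mem_lits_true {L : Lit} {C : Clause} (hL : L ∈ C) :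
    ∀ {F : CF}, C ∈ F → L ∈ (CF.toFml F).lits true := by
  intro F
  induction F with
  | nil => simp
  | cons C0 F ih =>
    intro h
    cases F with
    | nil =>
      rcases List.mem_cons.mp h with rfl | h'
      · exact Clause.mem_lits_true hL
      · simp at h'
    | cons C1 F' =>
      rw [show CF.toFml (C0 :: C1 :: F') = .conj C0.toFml (CF.toFml (C1 :: F')) from rfl]
      show L ∈ C0.toFml.lits true ∪ (CF.toFml (C1 :: F')).lits true
      rcases List.mem_cons.mp h with rfl | h'
      · exact Or.inl (Clause.mem_lits_true hL)
      · exact Or.inr (ih h')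

lemma CF.mem_lits_false {L : Lit} {C : Clause} (hL : L ∈ C) :
    ∀ {F : CF}, C ∈ F → L.compl ∈ (CF.toFml F).lits false := by
  intro F
  induction F with
  | nil => simp
  | cons C0 F ih =>
    intro h
    cases F with
    | nil =>
      rcases List.mem_cons.mp h with rfl | h'
      · exact Clause.mem_lits_false hL
      · simp at h'
    | cons C1 F' =>
      rw [show CF.toFml (C0 :: C1 :: F') = .conj C0.toFml (CF.toFml (C1 :: F')) from rfl]
      show L.compl ∈ C0.toFml.lits false ∪ (CF.toFml (C1 :: F')).lits false
      rcases List.mem_cons.mp h with rfl | h'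
      · exact Or.inl (Clause.mem_lits_false hL)
      · exact Or.inr (ih h')

lemma bigDisj_mem_lits {K : Lit} :
    ∀ {Hs : List Fml}, K ∈ (bigDisj Hs).lits true → ∃ H ∈ Hs, K ∈ H.lits true := by
  intro Hs
  induction Hs with
  | nil => simp [bigDisj, Fml.lits]
  | cons H Hs ih =>
    cases Hs with
    | nil => intro h; exact ⟨H, by simp, h⟩
    | cons H' Hs' =>
      rw [show bigDisj (H :: H' :: Hs') = .disj H (bigDisj (H' :: Hs')) from rfl]
      intro h
      rcases (show K ∈ H.lits true ∪ (bigDisj (H' :: Hs')).lits true from h) with h | h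
      · exact ⟨H, by simp, h⟩
      · obtain ⟨H'', hmem, hK⟩ := ih h
        exact ⟨H'', List.mem_cons_of_mem _ hmem, hK⟩

lemma bigConj_mem_lits {K : Lit} :
    ∀ {Hs : List Fml}, K ∈ (bigConj Hs).lits true → ∃ H ∈ Hs, K ∈ H.lits true := by
  intro Hs
  induction Hs with
  | nil => simp [bigConj, Fml.lits]
  | cons H Hs ih =>
    cases Hs with
    | nil => intro h; exact ⟨H, by simp, h⟩
    | cons H' Hs' =>
      rw [show bigConj (H :: H' :: Hs') = .conj H (bigConj (H' :: Hs')) from rfl]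
      intro h
      rcases (show K ∈ H.lits true ∪ (bigConj (H' :: Hs')).lits true from h) with h | h
      · exact ⟨H, by simp, h⟩
      · obtain ⟨H'', hmem, hK⟩ := ih h
        exact ⟨H'', List.mem_cons_of_mem _ hmem, hK⟩
lemma ipol_sem (F G : CF)
    (hFg : ∀ C ∈ F, ∀ L ∈ C, Lit.isGround L)
    (hGg : ∀ C ∈ G, ∀ L ∈ C, Lit.isGround L)
    {anc : List (Lit × Bool)} {t : Tab2} {H : Fml} (hip : Ipol anc t H) :
    Tab2.isFor F G t → ∀ (D : Type) (M : Struc D) (a : ℕ → D),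
    (CF.sat M a F → (∀ p ∈ ((t.lit, t.side) :: anc), p.2 = true → Lit.sat M a p.1) →
        H.sat M a) ∧
    (CF.sat M a G → (∀ p ∈ ((t.lit, t.side) :: anc), p.2 = false → Lit.sat M a p.1) →
        ¬ H.sat M a) := by
  induction hip with
  | leafFF anc L hmem =>
    intro _ D M a
    refine ⟨?_, ?_⟩
    · intro _ hpath
      have h1 : Lit.sat M a L := hpath (L, true) (List.mem_cons_self) rfl
      have h2 : Lit.sat M a L.compl := hpath (L.compl, true) (List.mem_cons_of_mem _ hmem) rfl
      exact absurd h1 ((Lit.sat_compl M a L).mp h2)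
    · intro _ _ hs
      exact hs
  | leafFG anc L hmem =>
    intro _ D M a
    refine ⟨?_, ?_⟩
    · intro _ hpath
      exact hpath (L, true) (List.mem_cons_self) rfl
    · intro _ hpath
      have h2 : Lit.sat M a L.compl := hpath (L.compl, false) (List.mem_cons_of_mem _ hmem) rfl
      exact (Lit.sat_compl M a L).mp h2
  | leafGF anc L hmem =>
    intro _ D M a
    refine ⟨?_, ?_⟩
    · intro _ hpath
      exact hpath (L.compl, true) (List.mem_cons_of_mem _ hmem) rfl
    · intro _ hpath
      have h1 : Lit.sat M a L := hpath (L, false) (List.mem_cons_self) rfl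
      exact fun h2 => absurd h1 ((Lit.sat_compl M a L).mp h2)
  | leafGG anc L hmem =>
    intro _ D M a
    refine ⟨?_, ?_⟩
    · intro _ _
      trivial
    · intro _ hpath _
      have h1 : Lit.sat M a L := hpath (L, false) (List.mem_cons_self) rfl
      have h2 : Lit.sat M a L.compl := hpath (L.compl, false) (List.mem_cons_of_mem _ hmem) rfl
      exact absurd h1 ((Lit.sat_compl M a L).mp h2)
  | innerF anc L s cs Hs hne hsides hlen hrec ih =>
    intro hfor D M a
    cases hfor with
    | mk _ _ _ s' hside hinst hchild =>
      have hs' : s' = true := by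
        obtain ⟨t0, ht0⟩ := List.exists_mem_of_ne_nil cs hne
        rw [← hside t0 ht0]
        exact hsides t0 ht0
      subst hs'
      have hCmem : (cs.map Tab2.lit) ∈ F :=
        instOfSome_ground F _ hFg (by simpa using hinst hne)
      refine ⟨?_, ?_⟩
      · intro hFsat hpath
        have hcl : Clause.sat M a (cs.map Tab2.lit) := hFsat _ hCmem
        obtain ⟨K, hKmem, hKsat⟩ := hcl
        obtain ⟨t0, ht0, rfl⟩ := List.mem_map.mp hKmem
        obtain ⟨i, rfl⟩ := List.get_of_mem ht0
        have hihead := (ih i (hchild _ (List.get_mem _ _)) D M a).1 hFsat ?_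
        · exact (bigDisj_sat M a Hs).mpr ⟨_, List.get_mem _ _, hihead⟩
        · intro p hp hp2
          rcases List.mem_cons.mp hp with rfl | hp'
          · exact hKsat
          · exact hpath p hp' hp2
      · intro hGsat hpath hdis
        obtain ⟨H', hH'mem, hH'sat⟩ := (bigDisj_sat M a Hs).mp hdis
        obtain ⟨j, rfl⟩ := List.get_of_mem hH'mem
        set i : Fin cs.length := Fin.cast hlen.symm j with hi
        have hcast : Fin.cast hlen i = j := by ext; simp [hi]
        have := (ih i (hchild _ (List.get_mem _ _)) D M a).2 hGsat ?_
        · rw [hcast] at this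
          exact this hH'sat
        · intro p hp hp2
          rcases List.mem_cons.mp hp with rfl | hp'
          · rw [hsides _ (List.get_mem _ _)] at hp2
            exact absurd hp2 (by simp)
          · exact hpath p hp' hp2
  | innerG anc L s cs Hs hne hsides hlen hrec ih =>
    intro hfor D M a
    cases hfor with
    | mk _ _ _ s' hside hinst hchild =>
      have hs' : s' = false := by
        obtain ⟨t0, ht0⟩ := List.exists_mem_of_ne_nil cs hne
        rw [← hside t0 ht0]
        exact hsides t0 ht0
      subst hs'
      have hCmem : (cs.map Tab2.lit) ∈ G :=
        instOfSome_ground G _ hGg (by simpa using hinst hne)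
      refine ⟨?_, ?_⟩
      · intro hFsat hpath
        refine (bigConj_sat M a Hs).mpr ?_
        intro H' hH'mem
        obtain ⟨j, rfl⟩ := List.get_of_mem hH'mem
        set i : Fin cs.length := Fin.cast hlen.symm j with hi
        have hcast : Fin.cast hlen i = j := by ext; simp [hi]
        have := (ih i (hchild _ (List.get_mem _ _)) D M a).1 hFsat ?_
        · rw [hcast] at this
          exact this
        · intro p hp hp2
          rcases List.mem_cons.mp hp with rfl | hp'
          · rw [hsides _ (List.get_mem _ _)] at hp2
            exact absurd hp2 (by simp)
          · exact hpath p hp' hp2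
      · intro hGsat hpath hconj
        have hcl : Clause.sat M a (cs.map Tab2.lit) := hGsat _ hCmem
        obtain ⟨K, hKmem, hKsat⟩ := hcl
        obtain ⟨t0, ht0, rfl⟩ := List.mem_map.mp hKmem
        obtain ⟨i, rfl⟩ := List.get_of_mem ht0
        have hnot := (ih i (hchild _ (List.get_mem _ _)) D M a).2 hGsat ?_
        · exact hnot ((bigConj_sat M a Hs).mp hconj _ (List.get_mem _ _))
        · intro p hp hp2
          rcases List.mem_cons.mp hp with rfl | hp'
          · exact hKsat
          · exact hpath p hp' hp2
lemma ipol_lits (F G : CF)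
    (hFg : ∀ C ∈ F, ∀ L ∈ C, Lit.isGround L)
    (hGg : ∀ C ∈ G, ∀ L ∈ C, Lit.isGround L)
    {anc : List (Lit × Bool)} {t : Tab2} {H : Fml} (hip : Ipol anc t H) :
    Tab2.isFor F G t →
    (cond t.side (∃ C ∈ F, t.lit ∈ C) (∃ C ∈ G, t.lit ∈ C)) →
    (∀ p ∈ anc, cond p.2 (∃ C ∈ F, p.1 ∈ C) (∃ C ∈ G, p.1 ∈ C)) →
    ∀ K ∈ H.lits true, (∃ C ∈ F, K ∈ C) ∧ (∃ C ∈ G, K.compl ∈ C) := by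
  induction hip with
  | leafFF anc L hmem =>
    intro _ _ _ K hK
    simp [Fml.lits] at hK
  | leafFG anc L hmem =>
    intro _ hself hanc K hK
    rw [Lit.lits_toFml_true] at hK
    obtain rfl : K = L := hK
    exact ⟨hself, hanc (K.compl, false) hmem⟩
  | leafGF anc L hmem =>
    intro _ hself hanc K hK
    rw [Lit.lits_toFml_true] at hK
    obtain rfl : K = L.compl := hK
    refine ⟨hanc (L.compl, true) hmem, ?_⟩
    rw [Lit.compl_compl]
    exact hself
  | leafGG anc L hmem =>
    intro _ _ _ K hK
    simp [Fml.lits] at hK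
  | innerF anc L s cs Hs hne hsides hlen hrec ih =>
    intro hfor hself hanc K hK
    cases hfor with
    | mk _ _ _ s' hside hinst hchild =>
      have hs' : s' = true := by
        obtain ⟨t0, ht0⟩ := List.exists_mem_of_ne_nil cs hne
        rw [← hside t0 ht0]; exact hsides t0 ht0
      subst hs'
      have hCmem : (cs.map Tab2.lit) ∈ F :=
        instOfSome_ground F _ hFg (by simpa using hinst hne)
      obtain ⟨H', hH'mem, hKH'⟩ := bigDisj_mem_lits hK
      obtain ⟨j, rfl⟩ := List.get_of_mem hH'mem
      set i : Fin cs.length := Fin.cast hlen.symm j with hi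
      have hcast : Fin.cast hlen i = j := by ext; simp [hi]
      refine ih i (hchild _ (List.get_mem _ _)) ?_ ?_ K (by rw [hcast]; exact hKH')
      · rw [hsides _ (List.get_mem _ _)]
        exact ⟨cs.map Tab2.lit, hCmem, List.mem_map.mpr ⟨_, List.get_mem _ _, rfl⟩⟩
      · intro p hp
        rcases List.mem_cons.mp hp with rfl | hp'
        · exact hself
        · exact hanc p hp'
  | innerG anc L s cs Hs hne hsides hlen hrec ih =>
    intro hfor hself hanc K hK
    cases hfor with
    | mk _ _ _ s' hside hinst hchild =>
      have hs' : s' = false := by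
        obtain ⟨t0, ht0⟩ := List.exists_mem_of_ne_nil cs hne
        rw [← hside t0 ht0]; exact hsides t0 ht0
      subst hs'
      have hCmem : (cs.map Tab2.lit) ∈ G :=
        instOfSome_ground G _ hGg (by simpa using hinst hne)
      obtain ⟨H', hH'mem, hKH'⟩ := bigConj_mem_lits hK
      obtain ⟨j, rfl⟩ := List.get_of_mem hH'mem
      set i : Fin cs.length := Fin.cast hlen.symm j with hi
      have hcast : Fin.cast hlen i = j := by ext; simp [hi]
      refine ih i (hchild _ (List.get_mem _ _)) ?_ ?_ K (by rw [hcast]; exact hKH')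
      · rw [hsides _ (List.get_mem _ _)]
        exact ⟨cs.map Tab2.lit, hCmem, List.mem_map.mpr ⟨_, List.get_mem _ _, rfl⟩⟩
      · intro p hp
        rcases List.mem_cons.mp hp with rfl | hp'
        · exact hself
        · exact hanc p hp'

/-- Correctness of interpolant extraction from clausal ground tableaux.
If `F` and `G` are clausal ground formulas and `N₀` is the root of a leaf-closed
two-sided clausal ground tableau for `F` and `G`, then for (any possible value of)
`H = ipol(N₀)`: (1) F ⊨ H ⊨ ¬G, and (2) lit(H) ⊆ lit(F) ∩ lit(¬G). -/
theorem statement1 (F G : CF)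
    (hFg : ∀ C ∈ F, ∀ L ∈ C, Lit.isGround L)
    (hGg : ∀ C ∈ G, ∀ L ∈ C, Lit.isGround L)
    (T : Tableau2) (hfor : T.isFor F G) (hlc : T.leafClosed) (hg : T.ground)
    (H : Fml) (hipol : IpolRoot T.children H) :
    (entails (CF.toFml F) H ∧ entails H (.neg (CF.toFml G))) ∧
    H.litset ⊆ (CF.toFml F).litset ∩ (Fml.neg (CF.toFml G)).litset := by
  obtain ⟨⟨s', hside, hinst⟩, hchild⟩ := hfor
  obtain ⟨hne, _⟩ := hlc
  cases hipol with
  | rootF Hs hne' hsides hlen hrec =>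
    have hs' : s' = true := by
      obtain ⟨t0, ht0⟩ := List.exists_mem_of_ne_nil T.children hne
      rw [← hside t0 ht0]; exact hsides t0 ht0
    subst hs'
    have hCmem : (T.children.map Tab2.lit) ∈ F :=
      instOfSome_ground F _ hFg (by simpa using hinst hne)
    refine ⟨⟨?_, ?_⟩, ?_⟩
    · -- entails F H
      intro D hD M a hFsat'
      have hFsat : CF.sat M a F := (CF.sat_toFml M a F).mp hFsat'
      obtain ⟨K, hKmem, hKsat⟩ := hFsat _ hCmem
      obtain ⟨t0, ht0, rfl⟩ := List.mem_map.mp hKmem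
      obtain ⟨i, rfl⟩ := List.get_of_mem ht0
      have := (ipol_sem F G hFg hGg (hrec i) (hchild _ (List.get_mem _ _)) D M a).1 hFsat ?_
      · exact (bigDisj_sat M a Hs).mpr ⟨_, List.get_mem _ _, this⟩
      · intro p hp hp2
        rcases List.mem_cons.mp hp with rfl | hp'
        · exact hKsat
        · simp at hp'
    · -- entails H (neg G)
      intro D hD M a hH
      intro hG'
      have hGsat : CF.sat M a G := (CF.sat_toFml M a G).mp hG'
      obtain ⟨H', hH'mem, hH'sat⟩ := (bigDisj_sat M a Hs).mp hH
      obtain ⟨j, rfl⟩ := List.get_of_mem hH'mem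
      set i : Fin T.children.length := Fin.cast hlen.symm j with hi
      have hcast : Fin.cast hlen i = j := by ext; simp [hi]
      have := (ipol_sem F G hFg hGg (hrec i) (hchild _ (List.get_mem _ _)) D M a).2 hGsat ?_
      · rw [hcast] at this; exact this hH'sat
      · intro p hp hp2
        rcases List.mem_cons.mp hp with rfl | hp'
        · rw [hsides _ (List.get_mem _ _)] at hp2
          exact absurd hp2 (by simp)
        · simp at hp'
    · -- literal containment
      intro K hK
      obtain ⟨H', hH'mem, hKH'⟩ := bigDisj_mem_lits hK
      obtain ⟨j, rfl⟩ := List.get_of_mem hH'mem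
      set i : Fin T.children.length := Fin.cast hlen.symm j with hi
      have hcast : Fin.cast hlen i = j := by ext; simp [hi]
      have := ipol_lits F G hFg hGg (hrec i) (hchild _ (List.get_mem _ _)) ?_ ?_
        K (by rw [hcast]; exact hKH')
      · obtain ⟨⟨C, hCF, hKC⟩, ⟨C2, hCG, hKc⟩⟩ := this
        constructor
        · exact CF.mem_lits_true hKC hCF
        · show K ∈ (CF.toFml G).lits false
          have := CF.mem_lits_false hKc hCG
          rwa [Lit.compl_compl] at this
      · rw [hsides _ (List.get_mem _ _)]
        exact ⟨T.children.map Tab2.lit, hCmem, List.mem_map.mpr ⟨_, List.get_mem _ _, rfl⟩⟩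
      · intro p hp
        simp at hp
  | rootG Hs hne' hsides hlen hrec =>
    have hs' : s' = false := by
      obtain ⟨t0, ht0⟩ := List.exists_mem_of_ne_nil T.children hne
      rw [← hside t0 ht0]; exact hsides t0 ht0
    subst hs'
    have hCmem : (T.children.map Tab2.lit) ∈ G :=
      instOfSome_ground G _ hGg (by simpa using hinst hne)
    refine ⟨⟨?_, ?_⟩, ?_⟩
    · -- entails F H
      intro D hD M a hFsat'
      have hFsat : CF.sat M a F := (CF.sat_toFml M a F).mp hFsat'
      refine (bigConj_sat M a Hs).mpr ?_
      intro H' hH'mem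
      obtain ⟨j, rfl⟩ := List.get_of_mem hH'mem
      set i : Fin T.children.length := Fin.cast hlen.symm j with hi
      have hcast : Fin.cast hlen i = j := by ext; simp [hi]
      have := (ipol_sem F G hFg hGg (hrec i) (hchild _ (List.get_mem _ _)) D M a).1 hFsat ?_
      · rw [hcast] at this; exact this
      · intro p hp hp2
        rcases List.mem_cons.mp hp with rfl | hp'
        · rw [hsides _ (List.get_mem _ _)] at hp2
          exact absurd hp2 (by simp)
        · simp at hp'
    · -- entails H (neg G)
      intro D hD M a hH
      intro hG'
      have hGsat : CF.sat M a G := (CF.sat_toFml M a G).mp hG'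
      obtain ⟨K, hKmem, hKsat⟩ := hGsat _ hCmem
      obtain ⟨t0, ht0, rfl⟩ := List.mem_map.mp hKmem
      obtain ⟨i, rfl⟩ := List.get_of_mem ht0
      have := (ipol_sem F G hFg hGg (hrec i) (hchild _ (List.get_mem _ _)) D M a).2 hGsat ?_
      · exact this ((bigConj_sat M a Hs).mp hH _ (List.get_mem _ _))
      · intro p hp hp2
        rcases List.mem_cons.mp hp with rfl | hp'
        · exact hKsat
        · simp at hp'
    · -- literal containment
      intro K hK
      obtain ⟨H', hH'mem, hKH'⟩ := bigConj_mem_lits hK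
      obtain ⟨j, rfl⟩ := List.get_of_mem hH'mem
      set i : Fin T.children.length := Fin.cast hlen.symm j with hi
      have hcast : Fin.cast hlen i = j := by ext; simp [hi]
      have := ipol_lits F G hFg hGg (hrec i) (hchild _ (List.get_mem _ _)) ?_ ?_
        K (by rw [hcast]; exact hKH')
      · obtain ⟨⟨C, hCF, hKC⟩, ⟨C2, hCG, hKc⟩⟩ := this
        constructor
        · exact CF.mem_lits_true hKC hCF
        · show K ∈ (CF.toFml G).lits false
          have := CF.mem_lits_false hKc hCG
          rwa [Lit.compl_compl] at this
      · rw [hsides _ (List.get_mem _ _)]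
        exact ⟨T.children.map Tab2.lit, hCmem, List.mem_map.mpr ⟨_, List.get_mem _ _, rfl⟩⟩
      · intro p hp
        simp at hp

end CTIF
end

section
/- Let σ be an injective substitution and let E be a term or a quantifier-free formula such that dom(σ) ∩ var(E) = ∅. Then (E⁻σ)σ = E, i.e., applying σ after inversely applying σ to E yields E back. -/
open Classical

namespace CTIF

/-- If `σ` is an injective substitution and `E` is a term or a
quantifier-free formula with dom(σ) ∩ var(E) = ∅, then (E⁻σ)σ = E. -/
theorem statement6 (σ : Subst) (hinj : σ.inj) :
    (∀ t : Tm, Subst.dom σ ∩ t.vars = ∅ → (Tm.inv σ t).subst σ = t) ∧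
    (∀ E : Fml, E.isQF → Subst.dom σ ∩ E.free = ∅ → (Fml.inv σ E).subst σ = E) := by
  have htm : ∀ t : Tm, Subst.dom σ ∩ t.vars = ∅ → (Tm.inv σ t).subst σ = t := by
    intro t
    induction t with
    | var x =>
      intro hd
      simp only [Tm.inv]
      split
      · rename_i h
        simpa [Tm.subst] using h.choose_spec.2
      · have hx : x ∉ Subst.dom σ := by
          intro hx
          have : x ∈ Subst.dom σ ∩ (Tm.var x).vars := ⟨hx, by simp [Tm.vars]⟩
          simp [hd] at this
        simpa [Tm.subst, Subst.dom, Set.mem_setOf_eq] using not_not.mp hx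
    | app f n ts ih =>
      intro hd
      simp only [Tm.inv]
      split
      · rename_i h
        simpa [Tm.subst] using h.choose_spec.2
      · simp only [Tm.subst, Tm.app.injEq, heq_eq_eq, true_and]
        funext i
        apply ih
        apply Set.eq_empty_of_subset_empty
        intro v hv
        rw [← hd]
        exact ⟨hv.1, by simp [Tm.vars]; exact ⟨i, hv.2⟩⟩
  refine ⟨htm, ?_⟩
  intro E
  induction E with
  | tru => intro _ _; rfl
  | fls => intro _ _; rfl
  | atom p n ts =>
    intro _ hd
    simp only [Fml.inv, Fml.subst, Fml.atom.injEq, heq_eq_eq, true_and]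
    funext i
    apply htm
    apply Set.eq_empty_of_subset_empty
    intro v hv
    rw [← hd]
    exact ⟨hv.1, by simp [Fml.free]; exact ⟨i, hv.2⟩⟩
  | neg F ih =>
    intro hqf hd
    simp only [Fml.inv, Fml.subst, Fml.neg.injEq]
    exact ih hqf hd
  | conj F G ihF ihG =>
    intro hqf hd
    have h1 : Subst.dom σ ∩ F.free = ∅ := by
      apply Set.eq_empty_of_subset_empty; intro v hv; rw [← hd]
      exact ⟨hv.1, Or.inl hv.2⟩
    have h2 : Subst.dom σ ∩ G.free = ∅ := by
      apply Set.eq_empty_of_subset_empty; intro v hv; rw [← hd]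
      exact ⟨hv.1, Or.inr hv.2⟩
    simp only [Fml.inv, Fml.subst, Fml.conj.injEq]
    exact ⟨ihF hqf.1 h1, ihG hqf.2 h2⟩
  | disj F G ihF ihG =>
    intro hqf hd
    have h1 : Subst.dom σ ∩ F.free = ∅ := by
      apply Set.eq_empty_of_subset_empty; intro v hv; rw [← hd]
      exact ⟨hv.1, Or.inl hv.2⟩
    have h2 : Subst.dom σ ∩ G.free = ∅ := by
      apply Set.eq_empty_of_subset_empty; intro v hv; rw [← hd]
      exact ⟨hv.1, Or.inr hv.2⟩
    simp only [Fml.inv, Fml.subst, Fml.disj.injEq]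
    exact ⟨ihF hqf.1 h1, ihG hqf.2 h2⟩
  | all x F _ => intro hqf; exact absurd hqf (by simp [Fml.isQF])
  | exi x F _ => intro hqf; exact absurd hqf (by simp [Fml.isQF])

end CTIF
end

section
/- Let σ be an injective substitution and let F and G be quantifier-free first-order formulas without equality such that F ⊨ G. Then F⁻σ ⊨ G⁻σ, i.e., entailment between quantifier-free formulas is preserved under inverse application of an injective substitution. -/
open Classical

namespace CTIF

/-- The term structure over domain `Tm`, with predicates interpreted via `Tm.inv σ`
in a given structure `M` with assignment `a`. -/
noncomputable def termStruc {D : Type} (σ : Subst) (M : Struc D) (a : ℕ → D) : Struc Tm where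
  fn := fun f n ts => Tm.app f n ts
  pr := fun p n ts => M.pr p n (fun i => Tm.eval M a (Tm.inv σ (ts i)))

theorem eval_termStruc {D : Type} (σ : Subst) (M : Struc D) (a : ℕ → D) (t : Tm) :
    Tm.eval (termStruc σ M a) (fun x => Tm.var x) t = t := by
  induction t with
  | var x => rfl
  | app f n ts ih =>
      simp only [Tm.eval, termStruc]
      congr 1
      funext i
      exact ih i

theorem sat_termStruc {D : Type} (σ : Subst) (M : Struc D) (a : ℕ → D)
    (E : Fml) (hE : E.isQF) :
    E.sat (termStruc σ M a) (fun x => Tm.var x) ↔ (E.inv σ).sat M a := by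
  induction E with
  | tru => simp [Fml.sat, Fml.inv]
  | fls => simp [Fml.sat, Fml.inv]
  | atom p n ts =>
      simp only [Fml.sat, Fml.inv]
      simp_rw [eval_termStruc]
      simp [termStruc]
  | neg F ih => simp only [Fml.sat, Fml.inv]; rw [ih hE]
  | conj F G ihF ihG =>
      simp only [Fml.sat, Fml.inv]; rw [ihF hE.1, ihG hE.2]
  | disj F G ihF ihG =>
      simp only [Fml.sat, Fml.inv]; rw [ihF hE.1, ihG hE.2]
  | all x F ih => exact absurd hE id
  | exi x F ih => exact absurd hE id

/-- Entailment between quantifier-free formulas (without equality) is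
preserved under inverse application of an injective substitution: if F ⊨ G then
F⁻σ ⊨ G⁻σ. -/
theorem statement7 (σ : Subst) (hinj : σ.inj) (F G : Fml)
    (hF : F.isQF) (hG : G.isQF) (h : entails F G) :
    entails (Fml.inv σ F) (Fml.inv σ G) := by
  intro D _ M a hFa
  rw [← sat_termStruc σ M a G hG]
  exact h Tm ⟨Tm.var 0⟩ (termStruc σ M a) (fun x => Tm.var x)
    ((sat_termStruc σ M a F hF).2 hFa)

end CTIF
end

section
/- Let F be a first-order formula, let x₁,…,xₙ,y be variables that do not occur bound in F, and let f be an n-ary function symbol that does not occur in F. Then ∀x₁…∀xₙ∃y F is equivalent to ∃f ∀x₁…∀xₙ F{y ↦ f(x₁,…,xₙ)}; semantically: a structure M (over the language without f) satisfies ∀x₁…∀xₙ∃y F under an assignment if and only if there exists an interpretation of f on the domain of M such that the resulting expansion of M satisfies ∀x₁…∀xₙ F{y ↦ f(x₁,…,xₙ)} under that assignment. -/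
open Classical

namespace CTIF

/-- `M'` agrees with `M` everywhere except possibly in the interpretation of the
function symbol `f`. -/
def StrucEqExceptFn {D : Type} (M M' : Struc D) (f : ℕ) : Prop :=
  M'.pr = M.pr ∧ ∀ g, g ≠ f → M'.fn g = M.fn g

/-- Iterated update of an assignment along a list of variables. -/
def updList {D : Type} (a : ℕ → D) : (xs : List ℕ) → (Fin xs.length → D) → (ℕ → D)
  | [], _ => a
  | x :: xs, d => updList (Function.update a x (d ⟨0, Nat.succ_pos _⟩)) xs (fun i => d i.succ)

theorem updList_not_mem {D : Type} : ∀ (xs : List ℕ) (a : ℕ → D) (d : Fin xs.length → D)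
    (z : ℕ), z ∉ xs → updList a xs d z = a z
  | [], _, _, _, _ => rfl
  | x :: xs, a, d, z, hz => by
      have hzx : z ≠ x := fun h => hz (h ▸ (List.mem_cons_self : x ∈ x :: xs))
      have hzxs : z ∉ xs := fun h => hz (List.mem_cons_of_mem _ h)
      rw [updList, updList_not_mem xs _ _ z hzxs, Function.update_of_ne hzx]

theorem updList_get {D : Type} : ∀ (xs : List ℕ) (hnd : xs.Nodup) (a : ℕ → D)
    (d : Fin xs.length → D) (i : Fin xs.length), updList a xs d (xs.get i) = d i
  | [], _, _, _, i => absurd i.2 (Nat.not_lt_zero _)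
  | x :: xs, hnd, a, d, i => by
      rcases List.nodup_cons.mp hnd with ⟨hx, hnd'⟩
      match i with
      | ⟨0, _⟩ =>
          show updList (Function.update a x (d ⟨0, Nat.succ_pos _⟩)) xs _ x
            = d ⟨0, Nat.succ_pos _⟩
          rw [updList_not_mem xs _ _ x hx, Function.update_self]
      | ⟨j + 1, hj⟩ =>
          exact updList_get xs hnd' _ _ ⟨j, Nat.lt_of_succ_lt_succ hj⟩

theorem sat_alls {D : Type} (M : Struc D) (G : Fml) :
    ∀ (xs : List ℕ) (a : ℕ → D),
    Fml.sat (alls xs G) M a ↔ ∀ d : Fin xs.length → D, G.sat M (updList a xs d)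
  | [], a => by
      constructor
      · intro h d; exact h
      · intro h; exact h (fun i => absurd i.2 (Nat.not_lt_zero _))
  | x :: xs, a => by
      show (∀ e, Fml.sat (alls xs G) M (Function.update a x e)) ↔ _
      constructor
      · intro h d
        exact (sat_alls M G xs (Function.update a x (d ⟨0, Nat.succ_pos _⟩))).mp (h (d ⟨0, Nat.succ_pos _⟩)) _
      · intro h e
        refine (sat_alls M G xs (Function.update a x e)).mpr (fun d' => ?_)
        have := h (Fin.cons e d')
        show Fml.sat G M (updList (Function.update a x e) xs d')
        simp only [updList, Fin.cons_zero, Fin.cons_succ] at this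
        exact this

theorem Tm.eval_agree {D : Type} (M : Struc D) : ∀ (t : Tm) (a b : ℕ → D),
    (∀ x ∈ t.vars, a x = b x) → t.eval M a = t.eval M b
  | .var x, a, b, h => h x (by simp [Tm.vars])
  | .app f n ts, a, b, h => by
      show M.fn f n _ = M.fn f n _
      congr 1
      funext i
      exact Tm.eval_agree M (ts i) a b
        (fun x hx => h x (by simp only [Tm.vars, Set.mem_iUnion]; exact ⟨i, hx⟩))

theorem Tm.eval_eqExcept {D : Type} {M M' : Struc D} {f : ℕ}
    (hMM : StrucEqExceptFn M M' f) (a : ℕ → D) :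
    ∀ t : Tm, (∀ n, (f, n) ∉ t.funs) → t.eval M' a = t.eval M a
  | .var _, _ => rfl
  | .app g n ts, h => by
      have hg : g ≠ f := by
        intro hgf
        exact h n (by simp [Tm.funs, hgf])
      show M'.fn g n _ = M.fn g n _
      rw [hMM.2 g hg]
      congr 1
      funext i
      refine Tm.eval_eqExcept hMM a (ts i) (fun m hm => h m ?_)
      simp only [Tm.funs, Set.mem_insert_iff, Set.mem_iUnion]
      exact Or.inr ⟨i, hm⟩

theorem Fml.sat_eqExcept {D : Type} {M M' : Struc D} {f : ℕ}
    (hMM : StrucEqExceptFn M M' f) :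
    ∀ (F : Fml) (a : ℕ → D), (∀ n, (f, n) ∉ F.funs) →
      (F.sat M' a ↔ F.sat M a)
  | .tru, _, _ => Iff.rfl
  | .fls, _, _ => Iff.rfl
  | .atom p n ts, a, h => by
      show M'.pr p n _ ↔ M.pr p n _
      rw [hMM.1]
      have : (fun i => (ts i).eval M' a) = (fun i => (ts i).eval M a) := by
        funext i
        refine Tm.eval_eqExcept hMM a (ts i) (fun m hm => h m ?_)
        simp only [Fml.funs, Set.mem_iUnion]
        exact ⟨i, hm⟩
      rw [this]
  | .neg F, a, h => not_congr (Fml.sat_eqExcept hMM F a h)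
  | .conj F G, a, h => and_congr
      (Fml.sat_eqExcept hMM F a (fun n hn => h n (Set.mem_union_left _ hn)))
      (Fml.sat_eqExcept hMM G a (fun n hn => h n (Set.mem_union_right _ hn)))
  | .disj F G, a, h => or_congr
      (Fml.sat_eqExcept hMM F a (fun n hn => h n (Set.mem_union_left _ hn)))
      (Fml.sat_eqExcept hMM G a (fun n hn => h n (Set.mem_union_right _ hn)))
  | .all x F, a, h =>
      forall_congr' fun d => Fml.sat_eqExcept hMM F (Function.update a x d) h
  | .exi x F, a, h =>
      exists_congr fun d => Fml.sat_eqExcept hMM F (Function.update a x d) h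

theorem Tm.eval_subst {D : Type} (M : Struc D) :
    ∀ (t : Tm) (σ : Subst) (a : ℕ → D),
    (t.subst σ).eval M a = t.eval M (fun z => (σ z).eval M a)
  | .var x, σ, a => rfl
  | .app f n ts, σ, a => by
      show M.fn f n _ = M.fn f n _
      congr 1
      funext i
      exact Tm.eval_subst M (ts i) σ a

theorem Fml.sat_subst {D : Type} (M : Struc D) :
    ∀ (F : Fml) (σ : Subst) (a : ℕ → D),
    (∀ x ∈ F.bound, ∀ z, z ≠ x → x ∉ (σ z).vars) →
    ((F.subst σ).sat M a ↔ F.sat M (fun z => (σ z).eval M a))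
  | .tru, _, _, _ => Iff.rfl
  | .fls, _, _, _ => Iff.rfl
  | .atom p n ts, σ, a, _ => by
      show M.pr p n _ ↔ M.pr p n _
      have : (fun i => ((ts i).subst σ).eval M a)
          = (fun i => (ts i).eval M (fun z => (σ z).eval M a)) :=
        funext fun i => Tm.eval_subst M (ts i) σ a
      rw [this]
  | .neg F, σ, a, h => not_congr (Fml.sat_subst M F σ a h)
  | .conj F G, σ, a, h => and_congr
      (Fml.sat_subst M F σ a (fun x hx => h x (Set.mem_union_left _ hx)))
      (Fml.sat_subst M G σ a (fun x hx => h x (Set.mem_union_right _ hx)))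
  | .disj F G, σ, a, h => or_congr
      (Fml.sat_subst M F σ a (fun x hx => h x (Set.mem_union_left _ hx)))
      (Fml.sat_subst M G σ a (fun x hx => h x (Set.mem_union_right _ hx)))
  | .all x F, σ, a, h => by
      show (∀ d, (F.subst (Function.update σ x (Tm.var x))).sat M (Function.update a x d)) ↔
        (∀ d, F.sat M (Function.update (fun z => (σ z).eval M a) x d))
      refine forall_congr' fun d => ?_
      have hcond : ∀ x' ∈ F.bound, ∀ z, z ≠ x' →
          x' ∉ ((Function.update σ x (Tm.var x)) z).vars := by
        intro x' hx' z hz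
        by_cases hzx : z = x
        · subst hzx
          rw [Function.update_self]
          simp only [Tm.vars, Set.mem_singleton_iff]
          exact fun hh => hz hh.symm
        · rw [Function.update_of_ne hzx]
          exact h x' (Set.mem_insert_of_mem _ hx') z hz
      rw [Fml.sat_subst M F (Function.update σ x (Tm.var x)) (Function.update a x d) hcond]
      have : (fun z => ((Function.update σ x (Tm.var x)) z).eval M (Function.update a x d))
          = Function.update (fun z => (σ z).eval M a) x d := by
        funext z
        by_cases hzx : z = x
        · subst hzx
          rw [Function.update_self, Function.update_self]
          show Function.update a z d z = d
          exact Function.update_self z d a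
        · rw [Function.update_of_ne hzx, Function.update_of_ne hzx]
          refine Tm.eval_agree M (σ z) _ _ (fun v hv => ?_)
          have hvx : v ≠ x := by
            intro hvx; subst hvx
            exact h v (Set.mem_insert _ _) z hzx hv
          exact Function.update_of_ne hvx d a
      rw [this]
  | .exi x F, σ, a, h => by
      show (∃ d, (F.subst (Function.update σ x (Tm.var x))).sat M (Function.update a x d)) ↔
        (∃ d, F.sat M (Function.update (fun z => (σ z).eval M a) x d))
      refine exists_congr fun d => ?_
      have hcond : ∀ x' ∈ F.bound, ∀ z, z ≠ x' →
          x' ∉ ((Function.update σ x (Tm.var x)) z).vars := by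
        intro x' hx' z hz
        by_cases hzx : z = x
        · subst hzx
          rw [Function.update_self]
          simp only [Tm.vars, Set.mem_singleton_iff]
          exact fun hh => hz hh.symm
        · rw [Function.update_of_ne hzx]
          exact h x' (Set.mem_insert_of_mem _ hx') z hz
      rw [Fml.sat_subst M F (Function.update σ x (Tm.var x)) (Function.update a x d) hcond]
      have : (fun z => ((Function.update σ x (Tm.var x)) z).eval M (Function.update a x d))
          = Function.update (fun z => (σ z).eval M a) x d := by
        funext z
        by_cases hzx : z = x
        · subst hzx
          rw [Function.update_self, Function.update_self]
          show Function.update a z d z = d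
          exact Function.update_self z d a
        · rw [Function.update_of_ne hzx, Function.update_of_ne hzx]
          refine Tm.eval_agree M (σ z) _ _ (fun v hv => ?_)
          have hvx : v ≠ x := by
            intro hvx; subst hvx
            exact h v (Set.mem_insert _ _) z hzx hv
          exact Function.update_of_ne hvx d a
      rw [this]

/-- Second-order Skolemization. If x₁,…,xₙ,y do not occur bound in `F`
and the n-ary function symbol `f` does not occur in `F`, then a structure `M`
satisfies ∀x₁…∀xₙ∃y F under an assignment iff some expansion of `M` (reinterpreting
only `f`) satisfies ∀x₁…∀xₙ F{y ↦ f(x₁,…,xₙ)} under that assignment. -/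
theorem statement8 (F : Fml) (xs : List ℕ) (y : ℕ)
    (hnodup : (y :: xs).Nodup)
    (hxb : ∀ x ∈ xs, x ∉ F.bound) (hyb : y ∉ F.bound)
    (f : ℕ) (hf : ∀ n, (f, n) ∉ F.funs) :
    ∀ (D : Type), Nonempty D → ∀ (M : Struc D) (a : ℕ → D),
      Fml.sat (alls xs (.exi y F)) M a ↔
      ∃ M' : Struc D, StrucEqExceptFn M M' f ∧
        Fml.sat (alls xs (F.subst (Function.update Tm.var y
          (Tm.app f xs.length (fun i => Tm.var (xs.get i)))))) M' a := by
  intro D _ M a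
  rcases List.nodup_cons.mp hnodup with ⟨hyxs, hxsnd⟩
  set n := xs.length with hn
  set t : Tm := Tm.app f n (fun i => Tm.var (xs.get i)) with ht
  set σ : Subst := Function.update Tm.var y t with hσ
  have ht_vars : ∀ x, x ∈ t.vars → x ∈ xs := by
    intro x hx
    simp only [ht, Tm.vars, Set.mem_iUnion, Set.mem_singleton_iff] at hx
    rcases hx with ⟨i, hi⟩
    exact hi ▸ List.get_mem xs i
  have hcond : ∀ x ∈ F.bound, ∀ z, z ≠ x → x ∉ (σ z).vars := by
    intro x hx z hz
    by_cases hzy : z = y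
    · subst hzy
      rw [hσ, Function.update_self]
      exact fun hxt => hxb x (ht_vars x hxt) hx
    · rw [hσ, Function.update_of_ne hzy]
      simp only [Tm.vars, Set.mem_singleton_iff]
      exact fun hxz => hz hxz.symm
  -- key computation of the substituted assignment
  have hkey : ∀ (M' : Struc D) (d : Fin n → D),
      (fun z => (σ z).eval M' (updList a xs d))
        = Function.update (updList a xs d) y (M'.fn f n (fun i => d i)) := by
    intro M' d
    funext z
    by_cases hzy : z = y
    · subst hzy
      rw [hσ, Function.update_self, Function.update_self]
      show M'.fn f n _ = M'.fn f n _
      congr 1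
      funext i
      show updList a xs d (xs.get i) = d i
      exact updList_get xs hxsnd a d i
    · rw [hσ, Function.update_of_ne hzy, Function.update_of_ne hzy]
      rfl
  rw [sat_alls]
  constructor
  · intro h
    choose sk hsk using h
    refine ⟨⟨fun g m v => if hgm : g = f ∧ m = n then
        sk (fun i => v (Fin.cast hgm.2.symm i)) else M.fn g m v, M.pr⟩,
      ⟨rfl, fun g hg => funext fun m => funext fun v => dif_neg (fun hgm => hg hgm.1)⟩, ?_⟩
    rw [sat_alls]
    intro d
    set M' : Struc D := ⟨fun g m v => if hgm : g = f ∧ m = n then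
        sk (fun i => v (Fin.cast hgm.2.symm i)) else M.fn g m v, M.pr⟩ with hM'
    have hMM : StrucEqExceptFn M M' f :=
      ⟨rfl, fun g hg => funext fun m => funext fun v => dif_neg (fun hgm => hg hgm.1)⟩
    rw [Fml.sat_subst M' F σ _ hcond, hkey M' d]
    have hfn : M'.fn f n (fun i => d i) = sk d := by
      show (if hgm : f = f ∧ n = n then
        sk (fun i => (fun j => d j) (Fin.cast hgm.2.symm i)) else M.fn f n fun i => d i) = sk d
      rw [dif_pos ⟨rfl, rfl⟩]
      congr 1
    rw [hfn]
    exact (Fml.sat_eqExcept hMM F _ hf).mpr (hsk d)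
  · rintro ⟨M', hMM, hsat⟩ d
    rw [sat_alls] at hsat
    have := hsat d
    rw [Fml.sat_subst M' F σ _ hcond, hkey M' d] at this
    exact ⟨M'.fn f n (fun i => d i), (Fml.sat_eqExcept hMM F _ hf).mp this⟩

end CTIF
end
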